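/- Let L > 0 and let μ be a nonnegative finite measure on (0,L] with μ((0,L]) > 0. Suppose that for every integer n ≥ 2 there exists j_n ∈ ℕ with j_n + 2 ≤ 2ⁿ such that μ((L·j_n/2ⁿ, L·(j_n+2)/2ⁿ]) = μ((0,L]). Then there exists x₀ ∈ (0,L] such that μ({x₀}) = μ((0,L]), i.e., μ is the point mass μ((0,L])·δ_{x₀} on (0,L]. -/
import Mathlib

open MeasureTheory Set

/-- If a nonnegative finite measure on `(0,L]` with positive total
mass concentrates, at every dyadic scale `2⁻ⁿ` (`n ≥ 2`), all its mass on a union of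
two consecutive dyadic subintervals, then it is a point mass at some `x₀ ∈ (0,L]`. -/
theorem concentration_implies_point_mass
    (L : ℝ) (hL : 0 < L) (μ : Measure ℝ)
    (hsupp : μ ((Ioc (0 : ℝ) L)ᶜ) = 0)
    (hfin : μ (Ioc (0 : ℝ) L) ≠ ⊤)
    (hpos : 0 < μ (Ioc (0 : ℝ) L))
    (hyp : ∀ n : ℕ, 2 ≤ n → ∃ j : ℕ, j + 2 ≤ 2 ^ n ∧
      μ (Ioc (L * (j : ℝ) / 2 ^ n) (L * ((j : ℝ) + 2) / 2 ^ n)) = μ (Ioc (0 : ℝ) L)) :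
    ∃ x₀ ∈ Ioc (0 : ℝ) L, μ {x₀} = μ (Ioc (0 : ℝ) L) ∧
      μ.restrict (Ioc (0 : ℝ) L) = μ (Ioc (0 : ℝ) L) • Measure.dirac x₀ := by
  classical
  set S := Ioc (0 : ℝ) L with hSdef
  choose j hj hμj using hyp
  set I : ℕ → Set ℝ := fun n => if h : 2 ≤ n then
      Ioc (L * (j n h : ℝ) / 2 ^ n) (L * ((j n h : ℝ) + 2) / 2 ^ n) else S with hIdef
  have hImeas : ∀ n, MeasurableSet (I n) := by
    intro n; simp only [hIdef]; split <;> exact measurableSet_Ioc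
  have hIμ : ∀ n, μ (I n) = μ S := by
    intro n; simp only [hIdef]; split
    · exact hμj _ _
    · rfl
  have hnull : ∀ n, μ (S \ I n) = 0 := by
    intro n
    have h1 : μ (S ∩ I n) + μ (S \ I n) = μ S := measure_inter_add_diff S (hImeas n)
    have h2 : μ (S ∩ I n) = μ S := by
      refine le_antisymm (measure_mono inter_subset_left) ?_
      calc μ S = μ (I n) := (hIμ n).symm
        _ = μ (I n ∩ S) + μ (I n \ S) := (measure_inter_add_diff _ measurableSet_Ioc).symm
        _ ≤ μ (S ∩ I n) + μ Sᶜ :=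
            add_le_add (le_of_eq (by rw [Set.inter_comm]))
              (measure_mono fun x hx => hx.2)
        _ = μ (S ∩ I n) := by rw [hsupp, add_zero]
    rw [h2] at h1
    have := ENNReal.add_right_inj hfin (b := μ (S \ I n)) (c := 0)
    rw [add_zero] at this
    exact this.mp h1
  set A : Set ℝ := S ∩ ⋂ n, I n with hAdef
  have hSA : μ (S \ A) = 0 := by
    have : S \ A = ⋃ n, S \ I n := by
      ext x
      simp only [hAdef, mem_diff, mem_inter_iff, mem_iInter, mem_iUnion, not_and, not_forall]
      tauto
    rw [this]
    exact measure_iUnion_null hnull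
  have hAμ : μ A = μ S := by
    refine le_antisymm (measure_mono inter_subset_left) ?_
    calc μ S ≤ μ (A ∪ (S \ A)) := measure_mono (by intro x hx; by_cases h : x ∈ A <;> simp [h, hx])
      _ ≤ μ A + μ (S \ A) := measure_union_le _ _
      _ = μ A := by rw [hSA, add_zero]
  have hAne : A.Nonempty := by
    apply nonempty_of_measure_ne_zero (μ := μ)
    rw [hAμ]; exact hpos.ne'
  obtain ⟨x₀, hx₀⟩ := hAne
  have hx₀S : x₀ ∈ S := hx₀.1
  -- diameter bound
  have hdiam : ∀ y ∈ A, y = x₀ := by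
    intro y hy
    by_contra hne
    have hpos' : 0 < |y - x₀| := abs_pos.mpr (sub_ne_zero.mpr hne)
    obtain ⟨n, hn⟩ := pow_unbounded_of_one_lt (2 * L / |y - x₀|) (by norm_num : (1:ℝ) < 2)
    have h2n : (2:ℝ) ^ n ≤ 2 ^ (n + 2) := by
      apply pow_le_pow_right₀ (by norm_num) (by omega)
    set m := n + 2 with hm
    have hm2 : 2 ≤ m := by omega
    have hyI : y ∈ I m := by
      have := hy.2; rw [mem_iInter] at this; exact this m
    have hxI : x₀ ∈ I m := by
      have := hx₀.2; rw [mem_iInter] at this; exact this m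
    simp only [hIdef, dif_pos hm2] at hyI hxI
    have hlen : |y - x₀| ≤ 2 * L / 2 ^ m := by
      have h1 := hyI.1; have h2 := hyI.2
      have h3 := hxI.1; have h4 := hxI.2
      have key : L * ((j m hm2 : ℝ) + 2) / 2 ^ m - L * (j m hm2 : ℝ) / 2 ^ m
          = 2 * L / 2 ^ m := by ring
      rw [abs_sub_le_iff]
      constructor <;> linarith
    have hlt : 2 * L / 2 ^ m < |y - x₀| := by
      rw [div_lt_iff₀ (pow_pos (by norm_num) m)]
      have : 2 * L < |y - x₀| * 2 ^ n := by
        rw [div_lt_iff₀ hpos'] at hn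
        linarith [hn]
      calc 2 * L < |y - x₀| * 2 ^ n := this
        _ ≤ |y - x₀| * 2 ^ m := by gcongr
    linarith
  have hA1 : A ⊆ {x₀} := fun y hy => hdiam y hy
  have hx₀μ : μ {x₀} = μ S := by
    refine le_antisymm (measure_mono (by simpa using hx₀S)) ?_
    calc μ S = μ A := hAμ.symm
      _ ≤ μ {x₀} := measure_mono hA1
  have hSx : μ (S \ {x₀}) = 0 := by
    have h1 : μ (S ∩ {x₀}) + μ (S \ {x₀}) = μ S := measure_inter_add_diff S (measurableSet_singleton _)
    have h2 : μ (S ∩ {x₀}) = μ S := by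
      refine le_antisymm (measure_mono inter_subset_left) ?_
      rw [← hx₀μ]
      exact measure_mono (by simp [hx₀S])
    rw [h2] at h1
    have := ENNReal.add_right_inj hfin (b := μ (S \ {x₀})) (c := 0)
    rw [add_zero] at this
    exact this.mp h1
  refine ⟨x₀, hx₀S, hx₀μ, ?_⟩
  ext s hs
  rw [Measure.restrict_apply hs, Measure.smul_apply, Measure.dirac_apply' _ hs, smul_eq_mul]
  by_cases hxs : x₀ ∈ s
  · have : μ (s ∩ S) = μ S := by
      refine le_antisymm (measure_mono inter_subset_right) ?_
      rw [← hx₀μ]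
      exact measure_mono (by simp [hxs, hx₀S])
    rw [this, indicator_of_mem hxs, Pi.one_apply, mul_one]
  · have : μ (s ∩ S) = 0 := by
      refine measure_mono_null ?_ hSx
      intro x hx
      exact ⟨hx.2, by rintro rfl; exact hxs hx.1⟩
    rw [this, indicator_of_notMem hxs, mul_zero]
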